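/- Let E ⊂ S^d, let φ be a dimension function, and let τ : (0,1) → (0,∞) be nonincreasing with τ(x) → ∞ as x → 0⁺. Suppose H^φ(E) = 0 and τ(s) = O(s^{-d} φ(s)). Then there exists a nonnegative f ∈ L¹(S^d) such that for every y ∈ E, limsup_{r→1} P[f](ry)/τ(1-r) = +∞. -/

import Mathlib

open Metric Set MeasureTheory Filter

/-- The Poisson kernel on the unit ball of `ℝ^{d+1}`. -/
noncomputable def ballPoissonKernel (d : ℕ) (x ξ : EuclideanSpace ℝ (Fin (d + 1))) : ℝ :=
  (1 - ‖x‖ ^ 2) / ‖x - ξ‖ ^ (d + 1)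

/-- The normalized surface measure on the unit sphere of `ℝ^{d+1}`. -/
noncomputable def sphereMeasure (d : ℕ) :
    Measure (sphere (0 : EuclideanSpace ℝ (Fin (d + 1))) 1) :=
  ((volume : Measure (EuclideanSpace ℝ (Fin (d + 1)))).toSphere Set.univ)⁻¹ •
    (volume : Measure (EuclideanSpace ℝ (Fin (d + 1)))).toSphere


open scoped Pointwise ENNReal

variable {d : ℕ}
local notation "Ed" => EuclideanSpace ℝ (Fin (d+1))
local notation "Sd" => sphere (0 : EuclideanSpace ℝ (Fin (d+1))) 1



lemma cone_subset (c : sphere (0:Ed) 1) {r : ℝ} (hr : 0 < r) :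
    ball ((1/2 : ℝ) • (c:Ed)) (min (1/8) (r/8)) ⊆
      Ioo (0:ℝ) 1 • ((↑) '' (Metric.closedBall c r) : Set Ed) := by
  intro x hx
  have hc : ‖(c:Ed)‖ = 1 := by simpa using mem_sphere_zero_iff_norm.mp c.2
  set ε := min (1/8 : ℝ) (r/8) with hε
  have hε8 : ε ≤ 1/8 := min_le_left _ _
  have hεr : ε ≤ r/8 := min_le_right _ _
  have hε0 : 0 < ε := lt_min (by norm_num) (by linarith)
  have hxp : ‖x - (1/2 : ℝ) • (c:Ed)‖ < ε := by
    simpa [dist_eq_norm] using hx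
  have hpn : ‖(1/2 : ℝ) • (c:Ed)‖ = 1/2 := by
    rw [norm_smul, hc]; norm_num
  have haux : |‖x‖ - 1/2| < ε := by
    have := abs_norm_sub_norm_le x ((1/2 : ℝ) • (c:Ed))
    rw [hpn] at this
    exact lt_of_le_of_lt this hxp
  rw [abs_sub_lt_iff] at haux
  have hx0 : (0:ℝ) < ‖x‖ := by linarith
  have hx1 : ‖x‖ < 1 := by linarith
  set u : Ed := ‖x‖⁻¹ • x with hu
  have hun : ‖u‖ = 1 := by
    rw [hu, norm_smul, norm_inv, norm_norm, inv_mul_cancel₀ hx0.ne']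
  have husph : u ∈ sphere (0:Ed) 1 := by
    simpa [mem_sphere_zero_iff_norm] using hun
  have hkey : ‖x - ‖x‖ • (c:Ed)‖ ≤ 2*ε := by
    have h1 : x - ‖x‖ • (c:Ed) = (x - (1/2:ℝ) • (c:Ed)) + ((1/2 - ‖x‖) • (c:Ed)) := by
      rw [sub_smul]; abel
    rw [h1]
    have h2 : ‖((1/2 - ‖x‖ : ℝ)) • (c:Ed)‖ = |1/2 - ‖x‖| := by
      rw [norm_smul, hc, mul_one, Real.norm_eq_abs]
    have h3 : |1/2 - ‖x‖| ≤ ε := by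
      rw [abs_sub_comm, abs_le]; constructor <;> linarith [haux.1, haux.2]
    calc ‖(x - (1/2:ℝ) • (c:Ed)) + ((1/2 - ‖x‖ : ℝ) • (c:Ed))‖
        ≤ ‖x - (1/2:ℝ) • (c:Ed)‖ + ‖((1/2 - ‖x‖:ℝ)) • (c:Ed)‖ := norm_add_le _ _
      _ ≤ 2*ε := by rw [h2]; linarith [h3]
  have hdist : ‖u - (c:Ed)‖ ≤ r := by
    have h1 : u - (c:Ed) = ‖x‖⁻¹ • (x - ‖x‖ • (c:Ed)) := by
      rw [smul_sub, hu, smul_smul, inv_mul_cancel₀ hx0.ne', one_smul]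
    rw [h1, norm_smul, norm_inv, norm_norm]
    have h38 : (3/8:ℝ) ≤ ‖x‖ := by linarith
    have : ‖x‖⁻¹ ≤ (3/8:ℝ)⁻¹ := by
      apply inv_anti₀ (by norm_num) h38
    calc ‖x‖⁻¹ * ‖x - ‖x‖ • (c:Ed)‖ ≤ (3/8:ℝ)⁻¹ * (2*ε) := by
          apply mul_le_mul this hkey (norm_nonneg _) (by norm_num)
      _ ≤ r := by rw [hε] at *; norm_num; linarith
  refine ⟨‖x‖, ⟨hx0, hx1⟩, u, ⟨⟨u, husph⟩, ?_, rfl⟩, ?_⟩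
  · simp only [Metric.mem_closedBall, Subtype.dist_eq, dist_eq_norm]
    exact hdist
  · show ‖x‖ • u = x
    rw [hu, smul_smul, mul_inv_cancel₀ hx0.ne', one_smul]

lemma tot_ne_zero : (volume : Measure Ed).toSphere Set.univ ≠ 0 := by
  rw [Measure.toSphere_apply_univ]
  have h1 : Module.finrank ℝ Ed = d + 1 := finrank_euclideanSpace_fin
  have h2 := (measure_ball_pos volume (0 : Ed) one_pos).ne'
  simp [h1, h2]

lemma tot_ne_top : (volume : Measure Ed).toSphere Set.univ ≠ ⊤ := measure_ne_top _ _

lemma sphereMeasure_univ : sphereMeasure d Set.univ = 1 := by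
  rw [sphereMeasure, Measure.smul_apply, smul_eq_mul]
  exact ENNReal.inv_mul_cancel tot_ne_zero tot_ne_top

lemma sphereMeasure_ne_top (s : Set (sphere (0:Ed) 1)) : sphereMeasure d s ≠ ⊤ := by
  have := measure_mono (μ := sphereMeasure d) (subset_univ s)
  rw [sphereMeasure_univ] at this
  exact (lt_of_le_of_lt this ENNReal.one_lt_top).ne

lemma toSphere_closedBall_ne_zero (c : sphere (0:Ed) 1) {r : ℝ} (hr : 0 < r) :
    (volume : Measure Ed).toSphere (Metric.closedBall c r) ≠ 0 := by
  rw [Measure.toSphere_apply' _ measurableSet_closedBall]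
  have hsub := cone_subset c hr
  have hpos : 0 < volume (Ioo (0:ℝ) 1 • ((↑) '' (Metric.closedBall c r) : Set Ed)) := by
    refine lt_of_lt_of_le ?_ (measure_mono hsub)
    exact measure_ball_pos _ _ (lt_min (by norm_num) (by linarith))
  have h1 : Module.finrank ℝ Ed = d + 1 := finrank_euclideanSpace_fin
  simp [h1]
  simpa using hpos.ne'

lemma sphereMeasure_closedBall_ne_zero (c : sphere (0:Ed) 1) {r : ℝ} (hr : 0 < r) :
    sphereMeasure d (Metric.closedBall c r) ≠ 0 := by
  rw [sphereMeasure, Measure.smul_apply, smul_eq_mul]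
  exact mul_ne_zero (ENNReal.inv_ne_zero.mpr tot_ne_top) (toSphere_closedBall_ne_zero c hr)


lemma small_phi {φ : ℝ → ℝ} (hφ0 : φ 0 = 0) (hφcont : Continuous φ) {b ε : ℝ}
    (hb : 0 < b) (hε : 0 < ε) : ∃ s, 0 < s ∧ s ≤ ε ∧ φ s < b := by
  have h1 : Filter.Tendsto φ (nhds 0) (nhds 0) := by
    simpa [hφ0] using hφcont.tendsto 0
  have h2 : ∀ᶠ s in nhds (0:ℝ), φ s < b := h1.eventually_lt_const hb
  rw [Metric.eventually_nhds_iff] at h2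
  obtain ⟨δ, hδ, hδ2⟩ := h2
  refine ⟨min (δ/2) ε, lt_min (by linarith) hε, min_le_right _ _, hδ2 ?_⟩
  rw [Real.dist_eq, sub_zero, abs_of_pos (lt_min (by linarith) hε)]
  exact lt_of_le_of_lt (min_le_left _ _) (by linarith)

lemma cover_lemma (E : Set Sd) {φ : ℝ → ℝ} (hφ0 : φ 0 = 0) (hφnonneg : ∀ s : ℝ, 0 ≤ φ s)
    (hφmono : Monotone φ) (hφcont : Continuous φ)
    (hE : Measure.mkMetric (fun t => ENNReal.ofReal (φ t.toReal)) E = 0)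
    {ε η : ℝ} (hε : 0 < ε) (hη : 0 < η) :
    ∃ (c : ℕ → Sd) (ρ : ℕ → ℝ), (∀ i, 0 < ρ i) ∧ (∀ i, ρ i ≤ ε) ∧
      (E ⊆ ⋃ i, Metric.closedBall (c i) (ρ i)) ∧
      ∑' i, ENNReal.ofReal (φ (ρ i)) ≤ ENNReal.ofReal η := by
  classical
  obtain ⟨z0, hz0⟩ := (NormedSpace.sphere_nonempty (x := (0:Ed)) (r := 1)).mpr zero_le_one
  set z : Sd := ⟨z0, hz0⟩ with hzdef
  rw [Measure.mkMetric_apply] at hE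
  have h1 : (⨅ (t : ℕ → Set Sd) (_ : E ⊆ iUnion t)
      (_ : ∀ n, EMetric.diam (t n) ≤ ENNReal.ofReal ε),
      ∑' n, ⨆ _ : (t n).Nonempty,
        (fun t : ℝ≥0∞ => ENNReal.ofReal (φ t.toReal)) (EMetric.diam (t n))) = 0 := by
    have h0 := ENNReal.iSup_eq_zero.mp hE (ENNReal.ofReal ε)
    exact ENNReal.iSup_eq_zero.mp h0 (ENNReal.ofReal_pos.mpr hε)
  have h2 : (⨅ (t : ℕ → Set Sd) (_ : E ⊆ iUnion t)
      (_ : ∀ n, EMetric.diam (t n) ≤ ENNReal.ofReal ε),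
      ∑' n, ⨆ _ : (t n).Nonempty,
        (fun t : ℝ≥0∞ => ENNReal.ofReal (φ t.toReal)) (EMetric.diam (t n)))
      < ENNReal.ofReal (η/2) := by
    rw [h1]; exact ENNReal.ofReal_pos.mpr (by linarith)
  obtain ⟨t, ht⟩ := iInf_lt_iff.mp h2
  obtain ⟨hcov, ht⟩ := iInf_lt_iff.mp ht
  obtain ⟨hdiam, hsum⟩ := iInf_lt_iff.mp ht
  -- choose tiny radii
  have htiny : ∀ n : ℕ, ∃ s, 0 < s ∧ s ≤ ε ∧ φ s < η/4 * (1/2)^n := by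
    intro n
    exact small_phi hφ0 hφcont (by positivity) hε
  choose tiny htiny0 htinyε htinyφ using htiny
  set ρ' : ℕ → ℝ := fun n => (EMetric.diam (t n)).toReal with hρ'
  set c : ℕ → Sd := fun n => if h : (t n).Nonempty then h.some else z with hc
  set ρ : ℕ → ℝ := fun n => max (ρ' n) (tiny n) with hρdef
  have hdne : ∀ n, EMetric.diam (t n) ≠ ⊤ :=
    fun n => ((hdiam n).trans_lt ENNReal.ofReal_lt_top).ne
  have hρ'ε : ∀ n, ρ' n ≤ ε := fun n =>
    ENNReal.toReal_le_of_le_ofReal hε.le (hdiam n)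
  refine ⟨c, ρ, fun i => lt_max_of_lt_right (htiny0 i), fun i => max_le (hρ'ε i) (htinyε i),
    ?_, ?_⟩
  · intro y hy
    obtain ⟨n, hn⟩ := Set.mem_iUnion.mp (hcov hy)
    have hne : (t n).Nonempty := ⟨y, hn⟩
    refine Set.mem_iUnion.mpr ⟨n, ?_⟩
    rw [Metric.mem_closedBall]
    have hd : dist y (c n) ≤ ρ' n := by
      have h3 : edist y (c n) ≤ EMetric.diam (t n) := by
        apply EMetric.edist_le_diam_of_mem hn
        simp only [hc, dif_pos hne]
        exact hne.some_mem
      rw [dist_edist]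
      exact ENNReal.toReal_mono (hdne n) h3
    exact hd.trans (le_max_left _ _)
  · have hterm : ∀ n, ENNReal.ofReal (φ (ρ n)) ≤
        (⨆ _ : (t n).Nonempty, ENNReal.ofReal (φ (ρ' n))) + ENNReal.ofReal (η/4 * (1/2)^n) := by
      intro n
      have hmax : φ (ρ n) = max (φ (ρ' n)) (φ (tiny n)) := hφmono.map_max
      rw [hρdef] at hmax
      rw [show φ (ρ n) = max (φ (ρ' n)) (φ (tiny n)) from hφmono.map_max]
      rw [Monotone.map_max (fun a b hab => ENNReal.ofReal_le_ofReal hab)]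
      apply max_le
      · by_cases h : (t n).Nonempty
        · simp only [h, iSup_pos]
          exact le_add_right le_rfl
        · have he : t n = ∅ := Set.not_nonempty_iff_eq_empty.mp h
          have : ρ' n = 0 := by simp [hρ', he, show EMetric.diam (∅ : Set Sd) = 0 from Metric.ediam_empty]
          simp [this, hφ0]
      · exact le_add_left (ENNReal.ofReal_le_ofReal (htinyφ n).le)
    have hgeom : ∑' n : ℕ, ENNReal.ofReal (η/4 * (1/2)^n) = ENNReal.ofReal (η/2) := by
      rw [← ENNReal.ofReal_tsum_of_nonneg (fun n => by positivity)
        (summable_geometric_two.mul_left _)]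
      congr 1
      rw [tsum_mul_left, tsum_geometric_two]
      ring
    calc ∑' i, ENNReal.ofReal (φ (ρ i))
        ≤ ∑' n, ((⨆ _ : (t n).Nonempty, ENNReal.ofReal (φ (ρ' n)))
            + ENNReal.ofReal (η/4 * (1/2)^n)) := ENNReal.tsum_le_tsum hterm
      _ = (∑' n, ⨆ _ : (t n).Nonempty, ENNReal.ofReal (φ (ρ' n)))
            + ∑' n, ENNReal.ofReal (η/4 * (1/2)^n) := ENNReal.tsum_add
      _ ≤ ENNReal.ofReal (η/2) + ENNReal.ofReal (η/2) := by
          rw [hgeom]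
          exact add_le_add hsum.le le_rfl
      _ = ENNReal.ofReal η := by
          rw [← ENNReal.ofReal_add (by linarith) (by linarith)]
          ring_nf


lemma poisson_nonneg {x ξ : Ed} (hx : ‖x‖ ≤ 1) : 0 ≤ ballPoissonKernel d x ξ := by
  apply div_nonneg
  · nlinarith [norm_nonneg x]
  · positivity

lemma poisson_ub {x ξ : Ed} (hξ : ‖ξ‖ = 1) {s : ℝ} (hs : 0 < s) (hx : ‖x‖ ≤ 1 - s) :
    ballPoissonKernel d x ξ ≤ 1 / s ^ (d + 1) := by
  have hx1 : ‖x‖ ≤ 1 := by linarith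
  have hden : s ≤ ‖x - ξ‖ := by
    have := norm_sub_norm_le ξ x
    rw [hξ] at this
    rw [norm_sub_rev]
    linarith
  apply div_le_div₀ (by norm_num) (by nlinarith [norm_nonneg x]) (by positivity)
  exact pow_le_pow_left₀ hs.le hden _

lemma poisson_lb {y ξ : Ed} (hy : ‖y‖ = 1) (hξ : ‖ξ‖ = 1) {s : ℝ} (hs : 0 < s)
    (hs2 : s ≤ 1/2) (hdist : ‖y - ξ‖ ≤ 2 * s) :
    s / (3 * s) ^ (d + 1) ≤ ballPoissonKernel d ((1 - s) • y) ξ := by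
  have hnx : ‖(1 - s) • y‖ = 1 - s := by
    rw [norm_smul, hy, mul_one, Real.norm_eq_abs, abs_of_pos (by linarith)]
  have hnum : s ≤ 1 - ‖(1 - s) • y‖ ^ 2 := by rw [hnx]; nlinarith
  have hD1 : ‖(1 - s) • y - ξ‖ ≤ 3 * s := by
    have h1 : (1 - s) • y - ξ = (-s) • y + (y - ξ) := by
      rw [sub_smul, one_smul, neg_smul]; abel
    rw [h1]
    calc ‖(-s) • y + (y - ξ)‖ ≤ ‖(-s) • y‖ + ‖y - ξ‖ := norm_add_le _ _
      _ ≤ s + 2 * s := by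
          rw [norm_smul, hy, mul_one, Real.norm_eq_abs, abs_neg, abs_of_pos hs]
          linarith
      _ = 3 * s := by ring
  have hD0 : s ≤ ‖(1 - s) • y - ξ‖ := by
    have := norm_sub_norm_le ξ ((1 - s) • y)
    rw [hξ, hnx, norm_sub_rev] at this
    linarith
  apply div_le_div₀ (by nlinarith [hnum, hs]) hnum (pow_pos (lt_of_lt_of_le hs hD0) _)
  exact pow_le_pow_left₀ (by linarith) hD1 _

lemma poisson_cont {x : Ed} (hx : ‖x‖ < 1) :
    Continuous fun ξ : sphere (0:Ed) 1 => ballPoissonKernel d x (ξ:Ed) := by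
  apply Continuous.div continuous_const
  · exact ((continuous_const.sub continuous_subtype_val).norm.pow _)
  · intro ξ
    have hξ : ‖(ξ:Ed)‖ = 1 := by simpa using mem_sphere_zero_iff_norm.mp ξ.2
    have : (0:ℝ) < ‖x - (ξ:Ed)‖ := by
      have := norm_sub_norm_le (ξ:Ed) x
      rw [hξ] at this
      rw [norm_sub_rev]
      linarith
    positivity


set_option maxHeartbeats 2000000 in
/-- If `H^φ(E) = 0` and `τ(s) = O(s^{-d} φ(s))` as `s → 0⁺`, then there is a nonnegative
`f ∈ L¹(S^d)` whose Poisson integral satisfies `limsup_{r→1} P[f](ry)/τ(1-r) = ∞` on `E`. -/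
theorem exists_integrable_blowup_on_null_set (d : ℕ)
    (E : Set (sphere (0 : EuclideanSpace ℝ (Fin (d + 1))) 1))
    (φ : ℝ → ℝ) (hφ0 : φ 0 = 0) (hφnonneg : ∀ s : ℝ, 0 ≤ φ s)
    (hφmono : Monotone φ) (hφcont : Continuous φ)
    (τ : ℝ → ℝ) (hτpos : ∀ x ∈ Ioo (0 : ℝ) 1, 0 < τ x)
    (hτanti : AntitoneOn τ (Ioo (0 : ℝ) 1))
    (hτtop : Tendsto τ (nhdsWithin 0 (Ioi 0)) atTop)
    (hE : Measure.mkMetric (fun t => ENNReal.ofReal (φ t.toReal)) E = 0)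
    (hO : τ =O[nhdsWithin 0 (Ioi 0)] fun s => s ^ (-(d : ℝ)) * φ s) :
    ∃ f : sphere (0 : EuclideanSpace ℝ (Fin (d + 1))) 1 → ℝ,
      Integrable f (sphereMeasure d) ∧ (∀ ξ, 0 ≤ f ξ) ∧
      ∀ y ∈ E, ∀ M : ℝ, ∃ᶠ r in nhdsWithin (1 : ℝ) (Iio 1),
        M < (∫ ξ, ballPoissonKernel d (r • (y : EuclideanSpace ℝ (Fin (d + 1)))) ξ * f ξ
              ∂(sphereMeasure d)) / τ (1 - r) := by
  classical
  set σ := sphereMeasure d with hσdef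
  -- covers at every scale
  have hcovers : ∀ n : ℕ, ∃ (c : ℕ → (sphere (0 : EuclideanSpace ℝ (Fin (d + 1))) 1)) (ρ : ℕ → ℝ), (∀ i, 0 < ρ i) ∧
      (∀ i, ρ i ≤ (1/2)^(n+1)) ∧ (E ⊆ ⋃ i, Metric.closedBall (c i) (ρ i)) ∧
      ∑' i, ENNReal.ofReal (φ (ρ i)) ≤ ENNReal.ofReal ((1/2)^n / (n+1)) := by
    intro n
    exact cover_lemma E hφ0 hφnonneg hφmono hφcont hE (by positivity) (by positivity)
  choose c ρ hρ0 hρε hcov hsum using hcovers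
  set B : ℕ → ℕ → Set (sphere (0 : EuclideanSpace ℝ (Fin (d + 1))) 1) := fun n i => Metric.closedBall (c n i) (ρ n i) with hBdef
  have hBmeas : ∀ n i, MeasurableSet (B n i) := fun n i => measurableSet_closedBall
  have hσB0 : ∀ n i, σ (B n i) ≠ 0 := fun n i => sphereMeasure_closedBall_ne_zero _ (hρ0 n i)
  have hσBt : ∀ n i, σ (B n i) ≠ ⊤ := fun n i => sphereMeasure_ne_top _
  set aE : ℕ × ℕ → ℝ≥0∞ := fun p => ENNReal.ofReal (((p.1 : ℝ) + 1) * φ (ρ p.1 p.2))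
    with haEdef
  -- the density
  set g : (sphere (0 : EuclideanSpace ℝ (Fin (d + 1))) 1) → ℝ≥0∞ := fun ξ =>
    ∑' p : ℕ × ℕ, (aE p / σ (B p.1 p.2)) * (B p.1 p.2).indicator 1 ξ with hgdef
  have hgmeas : Measurable g := by
    apply Measurable.ennreal_tsum
    intro p
    exact ((measurable_one.indicator (hBmeas p.1 p.2)).const_mul _)
  have haEsum : ∑' p : ℕ × ℕ, aE p ≤ 2 := by
    rw [ENNReal.tsum_prod']
    have hinner : ∀ n : ℕ, ∑' i, aE (n, i) ≤ ENNReal.ofReal ((1/2)^n) := by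
      intro n
      have h1 : ∀ i : ℕ, aE (n, i) = ENNReal.ofReal ((n : ℝ) + 1) *
          ENNReal.ofReal (φ (ρ n i)) := by
        intro i
        rw [haEdef]
        exact ENNReal.ofReal_mul (by positivity)
      calc ∑' i, aE (n, i) = ENNReal.ofReal ((n : ℝ) + 1) *
            ∑' i, ENNReal.ofReal (φ (ρ n i)) := by
            rw [← ENNReal.tsum_mul_left]
            exact tsum_congr h1
        _ ≤ ENNReal.ofReal ((n : ℝ) + 1) * ENNReal.ofReal ((1/2)^n / (n+1)) :=
            mul_le_mul_right (hsum n) _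
        _ = ENNReal.ofReal ((1/2)^n) := by
            rw [← ENNReal.ofReal_mul (by positivity)]
            congr 1
            field_simp
    calc ∑' n, ∑' i, aE (n, i) ≤ ∑' n : ℕ, ENNReal.ofReal ((1/2)^n) :=
          ENNReal.tsum_le_tsum hinner
      _ = ENNReal.ofReal 2 := by
          rw [← ENNReal.ofReal_tsum_of_nonneg (fun n => by positivity) summable_geometric_two]
          rw [tsum_geometric_two]
      _ = 2 := by norm_num
  have hgint : ∫⁻ ξ, g ξ ∂σ = ∑' p : ℕ × ℕ, aE p := by
    have hstep : ∫⁻ ξ, g ξ ∂σ = ∑' p : ℕ × ℕ,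
        ∫⁻ ξ, (aE p / σ (B p.1 p.2)) * (B p.1 p.2).indicator 1 ξ ∂σ :=
      lintegral_tsum (fun p =>
        ((measurable_one.indicator (hBmeas p.1 p.2)).const_mul _).aemeasurable)
    rw [hstep]
    apply tsum_congr
    intro p
    rw [lintegral_const_mul _ (measurable_one.indicator (hBmeas p.1 p.2)),
      lintegral_indicator_one (hBmeas p.1 p.2)]
    exact ENNReal.div_mul_cancel (hσB0 p.1 p.2) (hσBt p.1 p.2)
  have hgfin : ∫⁻ ξ, g ξ ∂σ ≠ ⊤ := by
    rw [hgint]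
    exact (lt_of_le_of_lt haEsum (by norm_num)).ne
  refine ⟨fun ξ => (g ξ).toReal, ?_, fun ξ => ENNReal.toReal_nonneg, ?_⟩
  · exact integrable_toReal_of_lintegral_ne_top hgmeas.aemeasurable hgfin
  intro y hy M
  -- process the big-O hypothesis
  rw [Asymptotics.isBigO_iff] at hO
  obtain ⟨C, hC⟩ := hO
  set C' : ℝ := max C 1 with hC'def
  have hC'1 : (1:ℝ) ≤ C' := le_max_right _ _
  have hC'0 : (0:ℝ) < C' := by linarith
  rw [eventually_nhdsWithin_iff, Metric.eventually_nhds_iff] at hC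
  obtain ⟨s₀, hs₀, hCb⟩ := hC
  -- indices of balls containing y
  have hidx : ∀ n : ℕ, ∃ i, y ∈ B n i := fun n => Set.mem_iUnion.mp (hcov n hy)
  choose idx hidxmem using hidx
  set sn : ℕ → ℝ := fun n => ρ n (idx n) with hsndef
  have hsn0 : ∀ n, 0 < sn n := fun n => hρ0 n (idx n)
  have hsnle : ∀ n, sn n ≤ (1/2)^(n+1) := fun n => hρε n (idx n)
  have hsn12 : ∀ n, sn n ≤ 1/2 := by
    intro n
    calc sn n ≤ (1/2)^(n+1) := hsnle n
      _ ≤ (1/2)^1 := pow_le_pow_of_le_one (by norm_num) (by norm_num) (by omega)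
      _ = 1/2 := by norm_num
  have hsn1 : ∀ n, sn n < 1 := fun n => lt_of_le_of_lt (hsn12 n) (by norm_num)
  -- the sequence of radii tends to 0
  have hsnlim : Tendsto sn atTop (nhds 0) := by
    apply squeeze_zero (fun n => (hsn0 n).le) hsnle
    have h1 : Tendsto (fun n : ℕ => (1/2 : ℝ)^n) atTop (nhds 0) :=
      tendsto_pow_atTop_nhds_zero_of_lt_one (by norm_num) (by norm_num)
    exact h1.comp (tendsto_add_atTop_nat 1)
  set u : ℕ → ℝ := fun n => 1 - sn n with hudef
  have hulim : Tendsto u atTop (nhdsWithin 1 (Iio 1)) := by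
    apply tendsto_nhdsWithin_of_tendsto_nhds_of_eventually_within
    · have := hsnlim.const_sub 1
      simpa [hudef] using this
    · exact Eventually.of_forall fun n => by
        simp only [hudef, Set.mem_Iio]
        linarith [hsn0 n]
  -- the key estimate, eventually in n
  have hev : ∀ᶠ n in atTop, M < (∫ ξ, ballPoissonKernel d
      ((u n) • (y : EuclideanSpace ℝ (Fin (d + 1)))) ξ * (g ξ).toReal ∂σ) / τ (1 - u n) := by
    have ev1 : ∀ᶠ n : ℕ in atTop, (1/2 : ℝ)^(n+1) < s₀ := by
      have h1 : Tendsto (fun n : ℕ => (1/2 : ℝ)^(n+1)) atTop (nhds 0) :=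
        (tendsto_pow_atTop_nhds_zero_of_lt_one (by norm_num) (by norm_num)).comp
          (tendsto_add_atTop_nat 1)
      exact h1.eventually_lt_const hs₀
    have ev2 : ∀ᶠ n : ℕ in atTop, M * (3^(d+1) * C') < (n : ℝ) + 1 := by
      have h1 := tendsto_natCast_atTop_atTop (R := ℝ)
      filter_upwards [h1.eventually_gt_atTop (M * (3^(d+1) * C'))] with n hn
      linarith
    filter_upwards [ev1, ev2] with n hn1 hn2
    set s : ℝ := sn n with hsdef
    have hs0 : 0 < s := hsn0 n
    have hs12 : s ≤ 1/2 := hsn12 n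
    have hss₀ : s < s₀ := lt_of_le_of_lt (hsnle n) hn1
    have hun : u n = 1 - s := rfl
    have h1u : 1 - u n = s := by rw [hun]; ring
    rw [h1u]
    have hτs : 0 < τ s := hτpos s ⟨hs0, lt_of_le_of_lt hs12 (by norm_num)⟩
    have hXnn : 0 ≤ s ^ (-(d:ℝ)) * φ s := mul_nonneg (Real.rpow_nonneg hs0.le _) (hφnonneg s)
    have hτle : τ s ≤ C' * (s ^ (-(d:ℝ)) * φ s) := by
      have hb := hCb (by rw [Real.dist_eq, sub_zero, abs_of_pos hs0]; exact hss₀) hs0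
      rw [Real.norm_eq_abs, Real.norm_eq_abs, abs_of_pos hτs, abs_of_nonneg hXnn] at hb
      calc τ s ≤ C * (s ^ (-(d:ℝ)) * φ s) := hb
        _ ≤ C' * (s ^ (-(d:ℝ)) * φ s) := mul_le_mul_of_nonneg_right (le_max_left _ _) hXnn
    have hφs : 0 < φ s := by
      rcases lt_or_eq_of_le (hφnonneg s) with h | h
      · exact h
      · exfalso
        have h7 : τ s ≤ 0 := by rw [← h, mul_zero, mul_zero] at hτle; exact hτle
        linarith
    have hrpow : s ^ (-(d:ℝ)) = (s ^ (d:ℕ))⁻¹ := by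
      rw [Real.rpow_neg hs0.le, Real.rpow_natCast]
    have hynorm : ‖(y : EuclideanSpace ℝ (Fin (d+1)))‖ = 1 := by
      simpa using mem_sphere_zero_iff_norm.mp y.2
    have hxn : ‖(u n) • (y : EuclideanSpace ℝ (Fin (d+1)))‖ = 1 - s := by
      rw [norm_smul, hynorm, mul_one, Real.norm_eq_abs, hun, abs_of_pos (by linarith)]
    have hx1 : ‖(u n) • (y : EuclideanSpace ℝ (Fin (d+1)))‖ < 1 := by rw [hxn]; linarith
    set P : sphere (0 : EuclideanSpace ℝ (Fin (d + 1))) 1 → ℝ :=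
      fun ξ => ballPoissonKernel d ((u n) • (y : EuclideanSpace ℝ (Fin (d+1)))) ξ with hPdef
    have hPmeas : Measurable P := (poisson_cont hx1).measurable
    have hPnn : ∀ ξ, 0 ≤ P ξ := fun ξ => poisson_nonneg hx1.le
    have hξnorm : ∀ ξ : sphere (0 : EuclideanSpace ℝ (Fin (d + 1))) 1,
        ‖(ξ : EuclideanSpace ℝ (Fin (d+1)))‖ = 1 := fun ξ => by
      simpa using mem_sphere_zero_iff_norm.mp ξ.2
    have hPlb : ∀ ξ ∈ B n (idx n), s / (3*s)^(d+1) ≤ P ξ := by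
      intro ξ hξ
      have hyc : dist y (c n (idx n)) ≤ s := Metric.mem_closedBall.mp (hidxmem n)
      have hξc : dist ξ (c n (idx n)) ≤ s := Metric.mem_closedBall.mp hξ
      have hdist : ‖(y : EuclideanSpace ℝ (Fin (d+1))) - ξ‖ ≤ 2*s := by
        have h3 : dist y ξ ≤ 2*s := by
          calc dist y ξ ≤ dist y (c n (idx n)) + dist (c n (idx n)) ξ := dist_triangle _ _ _
            _ ≤ s + s := add_le_add hyc (by rwa [dist_comm])
            _ = 2*s := by ring
        rwa [Subtype.dist_eq, dist_eq_norm] at h3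
      have h8 := poisson_lb hynorm (hξnorm ξ) hs0 hs12 hdist
      have hxeq : (u n) • (y : EuclideanSpace ℝ (Fin (d+1))) =
          (1 - s) • (y : EuclideanSpace ℝ (Fin (d+1))) := by rw [hun]
      rw [hPdef]
      simp only [hxeq]
      exact h8
    have hlow : ENNReal.ofReal (s/(3*s)^(d+1)) * aE (n, idx n) ≤
        ∫⁻ ξ, ENNReal.ofReal (P ξ) * g ξ ∂σ := by
      have hpt : ∀ ξ, (B n (idx n)).indicator
          (fun _ => ENNReal.ofReal (s/(3*s)^(d+1)) * (aE (n, idx n) / σ (B n (idx n)))) ξ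
          ≤ ENNReal.ofReal (P ξ) * g ξ := by
        intro ξ
        by_cases hmem : ξ ∈ B n (idx n)
        · rw [Set.indicator_of_mem hmem]
          apply mul_le_mul'
          · exact ENNReal.ofReal_le_ofReal (hPlb ξ hmem)
          · have h4 := ENNReal.le_tsum (f := fun p : ℕ × ℕ =>
              (aE p / σ (B p.1 p.2)) * (B p.1 p.2).indicator 1 ξ) (n, idx n)
            rw [hgdef]
            refine le_trans ?_ h4
            rw [Set.indicator_of_mem hmem]
            simp
        · rw [Set.indicator_of_notMem hmem]
          exact zero_le
      calc ENNReal.ofReal (s/(3*s)^(d+1)) * aE (n, idx n)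
          = (ENNReal.ofReal (s/(3*s)^(d+1)) * (aE (n, idx n) / σ (B n (idx n)))) *
              σ (B n (idx n)) := by
            rw [mul_assoc, ENNReal.div_mul_cancel (hσB0 n (idx n)) (hσBt n (idx n))]
        _ = ∫⁻ ξ, (B n (idx n)).indicator
              (fun _ => ENNReal.ofReal (s/(3*s)^(d+1)) * (aE (n, idx n) / σ (B n (idx n)))) ξ ∂σ := by
            rw [lintegral_indicator (hBmeas n (idx n)), setLIntegral_const]
        _ ≤ _ := lintegral_mono hpt
    have hup : ∫⁻ ξ, ENNReal.ofReal (P ξ) * g ξ ∂σ ≠ ⊤ := by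
      have h5 : ∫⁻ ξ, ENNReal.ofReal (P ξ) * g ξ ∂σ ≤ ENNReal.ofReal (1/s^(d+1)) * 2 := by
        calc ∫⁻ ξ, ENNReal.ofReal (P ξ) * g ξ ∂σ
            ≤ ∫⁻ ξ, ENNReal.ofReal (1/s^(d+1)) * g ξ ∂σ := by
              apply lintegral_mono
              intro ξ
              exact mul_le_mul_left
                (ENNReal.ofReal_le_ofReal (poisson_ub (hξnorm ξ) hs0 (le_of_eq hxn))) _
          _ = ENNReal.ofReal (1/s^(d+1)) * ∫⁻ ξ, g ξ ∂σ := lintegral_const_mul _ hgmeas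
          _ ≤ _ := by
              rw [hgint]
              exact mul_le_mul_right haEsum _
      exact (lt_of_le_of_lt h5 (ENNReal.mul_lt_top ENNReal.ofReal_lt_top (by norm_num))).ne
    have hfmeas : Measurable fun ξ => (g ξ).toReal := hgmeas.ennreal_toReal
    have hBo : ∫ ξ, P ξ * (g ξ).toReal ∂σ = (∫⁻ ξ, ENNReal.ofReal (P ξ) * g ξ ∂σ).toReal := by
      rw [integral_eq_lintegral_of_nonneg_ae
        (Eventually.of_forall fun ξ => mul_nonneg (hPnn ξ) ENNReal.toReal_nonneg)
        ((hPmeas.mul hfmeas).aestronglyMeasurable)]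
      congr 1
      apply lintegral_congr_ae
      filter_upwards [ae_lt_top hgmeas hgfin] with ξ hξ
      rw [ENNReal.ofReal_mul (hPnn ξ), ENNReal.ofReal_toReal hξ.ne]
    have hA0 : 0 ≤ (s/(3*s)^(d+1)) * (((n:ℝ)+1) * φ s) :=
      mul_nonneg (by positivity) (mul_nonneg (by positivity) hφs.le)
    have hIlb : (s/(3*s)^(d+1)) * (((n:ℝ)+1) * φ s) ≤ ∫ ξ, P ξ * (g ξ).toReal ∂σ := by
      rw [hBo]
      have h6 := ENNReal.toReal_mono hup hlow
      have h9 : ENNReal.ofReal (s/(3*s)^(d+1)) * aE (n, idx n) =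
          ENNReal.ofReal ((s/(3*s)^(d+1)) * (((n:ℝ)+1) * φ s)) := by
        rw [haEdef]
        dsimp only
        rw [← ENNReal.ofReal_mul (by positivity)]
      rw [h9, ENNReal.toReal_ofReal hA0] at h6
      exact h6
    have hq : ((s/(3*s)^(d+1)) * (((n:ℝ)+1) * φ s)) / (C' * (s ^ (-(d:ℝ)) * φ s))
        = ((n:ℝ)+1)/(3^(d+1) * C') := by
      rw [hrpow]
      have h3s : (3*s)^(d+1) = 3^(d+1) * s^(d+1) := mul_pow 3 s (d+1)
      rw [h3s]
      field_simp
      ring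
    have hM1 : M < ((s/(3*s)^(d+1)) * (((n:ℝ)+1) * φ s)) / (C' * (s ^ (-(d:ℝ)) * φ s)) := by
      rw [hq, lt_div_iff₀ (by positivity)]
      linarith
    have hM2 : ((s/(3*s)^(d+1)) * (((n:ℝ)+1) * φ s)) / (C' * (s ^ (-(d:ℝ)) * φ s))
        ≤ ((s/(3*s)^(d+1)) * (((n:ℝ)+1) * φ s)) / τ s :=
      div_le_div_of_nonneg_left hA0 hτs hτle
    have hM3 : ((s/(3*s)^(d+1)) * (((n:ℝ)+1) * φ s)) / τ s
        ≤ (∫ ξ, P ξ * (g ξ).toReal ∂σ) / τ s :=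
      (div_le_div_iff_of_pos_right hτs).mpr hIlb
    show M < (∫ ξ, P ξ * (g ξ).toReal ∂σ) / τ s
    exact lt_of_lt_of_le hM1 (le_trans hM2 hM3)


  exact hulim.frequently hev.frequently
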